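/- Every finite group with the Magnus Property is solvable. -/

import Mathlib

/-- A group has the Magnus Property if any two elements with the same normal
closure are conjugate or inverse-conjugate. -/
def MagnusProperty (G : Type*) [Group G] : Prop :=
  ∀ x y : G, Subgroup.normalClosure {x} = Subgroup.normalClosure {y} →
    IsConj x y ∨ IsConj x y⁻¹

section Helpers

open Subgroup in
lemma isConj_orderOf_eq {G : Type*} [Group G] {a b : G} (h : IsConj a b) :
    orderOf a = orderOf b := by
  obtain ⟨c, hc⟩ := isConj_iff.mp h
  rw [← hc]
  exact (orderOf_injective (MulAut.conj c).toMonoidHom (MulEquiv.injective _) a).symm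

variable {G : Type*} [Group G]

lemma normalClosure_singleton_inv (x : G) :
    Subgroup.normalClosure {x⁻¹} = Subgroup.normalClosure ({x} : Set G) := by
  apply le_antisymm
  · exact Subgroup.normalClosure_le_normal (by
      simp only [Set.singleton_subset_iff, SetLike.mem_coe]
      exact inv_mem (Subgroup.subset_normalClosure rfl))
  · exact Subgroup.normalClosure_le_normal (by
      simp only [Set.singleton_subset_iff, SetLike.mem_coe]
      have := inv_mem (Subgroup.subset_normalClosure (s := ({x⁻¹} : Set G)) rfl)
      simpa using this)

lemma normalClosure_singleton_conj (c x : G) :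
    Subgroup.normalClosure {c * x * c⁻¹} = Subgroup.normalClosure ({x} : Set G) := by
  apply le_antisymm
  · exact Subgroup.normalClosure_le_normal (by
      simp only [Set.singleton_subset_iff, SetLike.mem_coe]
      exact Subgroup.Normal.conj_mem inferInstance x
        (Subgroup.subset_normalClosure (s := ({x} : Set G)) rfl) c)
  · refine Subgroup.normalClosure_le_normal ?_
    simp only [Set.singleton_subset_iff, SetLike.mem_coe]
    have := Subgroup.Normal.conj_mem
      (inferInstance : (Subgroup.normalClosure {c * x * c⁻¹}).Normal)
      _ (Subgroup.subset_normalClosure (s := ({c * x * c⁻¹} : Set G)) rfl) c⁻¹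
    simpa [mul_assoc] using this

lemma isSolvable_of_normal_quotient (N : Subgroup G) [N.Normal]
    (h1 : IsSolvable N) (h2 : IsSolvable (G ⧸ N)) : IsSolvable G := by
  haveI : Group.IsSolvable N := h1
  haveI : Group.IsSolvable (G ⧸ N) := h2
  exact solvable_of_ker_le_range N.subtype (QuotientGroup.mk' N)
    (by rw [QuotientGroup.ker_mk']; exact le_of_eq (Subgroup.range_subtype N).symm)

lemma isSolvable_sup {H K : Subgroup G} [K.Normal]
    (hH : IsSolvable H) (hK : IsSolvable K) : IsSolvable ↥(H ⊔ K) := by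
  haveI : Group.IsSolvable H := hH
  haveI : Group.IsSolvable K := hK
  haveI : Group.IsSolvable (K.subgroupOf (H ⊔ K)) :=
    solvable_of_solvable_injective
      (f := (Subgroup.subgroupOfEquivOfLe (le_sup_right : K ≤ H ⊔ K)).toMonoidHom)
      (MulEquiv.injective _)
  haveI : Group.IsSolvable (H ⧸ K.subgroupOf H) := inferInstance
  haveI : Group.IsSolvable (↥(H ⊔ K) ⧸ K.subgroupOf (H ⊔ K)) :=
    solvable_of_surjective
      (f := (QuotientGroup.quotientInfEquivProdNormalQuotient H K).toMonoidHom)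
      (MulEquiv.surjective _)
  exact isSolvable_of_normal_quotient (K.subgroupOf (H ⊔ K)) (inferInstance : Group.IsSolvable _) (inferInstance : Group.IsSolvable _)

end Helpers

theorem finite_MP_isSolvable (G : Type*) [Group G] [Finite G]
    (hG : MagnusProperty G) : IsSolvable G := by
  classical
  by_contra hns
  -- the set of nonsolvable normal subgroups
  set S : Set (Subgroup G) := {K | K.Normal ∧ ¬IsSolvable K} with hS
  have hStop : (⊤ : Subgroup G) ∈ S := by
    refine ⟨inferInstance, fun h => hns ?_⟩
    haveI : Group.IsSolvable (⊤ : Subgroup G) := h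
    exact solvable_of_surjective (f := (Subgroup.topEquiv (G := G)).toMonoidHom)
      (MulEquiv.surjective _)
  obtain ⟨N, hNS, hNmin⟩ := Set.exists_min_image S (fun K : Subgroup G => Nat.card K) (Set.toFinite S) ⟨⊤, hStop⟩
  obtain ⟨hNnormal, hNns⟩ := hNS
  haveI := hNnormal
  -- every proper normal subgroup of G contained in N is solvable
  have hsolv_lt : ∀ K : Subgroup G, K.Normal → K ≤ N → K ≠ N → IsSolvable K := by
    intro K hKn hle hne
    by_contra h
    exact hne (Subgroup.eq_of_le_of_card_ge hle (hNmin K ⟨hKn, h⟩))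
  have hclle : ∀ x ∈ N, Subgroup.normalClosure {x} ≤ N := fun x hx =>
    Subgroup.normalClosure_le_normal (by simpa using hx)
  -- there is an element whose normal closure is all of N
  have hex : ∃ x ∈ N, Subgroup.normalClosure {x} = N := by
    by_contra hno
    push_neg at hno
    set A : Set (Subgroup G) := {K | K.Normal ∧ K ≤ N ∧ IsSolvable K} with hA
    obtain ⟨K₀, hK₀, hmax⟩ := Set.exists_max_image A (fun K : Subgroup G => Nat.card K) (Set.toFinite A)
      ⟨⊥, inferInstance, bot_le, (inferInstance : Group.IsSolvable _)⟩
    obtain ⟨hK₀n, hK₀le, hK₀sol⟩ := hK₀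
    haveI := hK₀n
    have hNK : N ≤ K₀ := by
      intro x hx
      have hle := hclle x hx
      have hsol : IsSolvable (Subgroup.normalClosure {x}) :=
        hsolv_lt _ inferInstance hle (hno x hx)
      have hsupA : Subgroup.normalClosure {x} ⊔ K₀ ∈ A :=
        ⟨inferInstance, sup_le hle hK₀le, isSolvable_sup hsol hK₀sol⟩
      have heq : K₀ = Subgroup.normalClosure {x} ⊔ K₀ :=
        Subgroup.eq_of_le_of_card_ge le_sup_right (hmax _ hsupA)
      rw [heq]
      exact Subgroup.mem_sup_left (Subgroup.subset_normalClosure (s := ({x} : Set G)) rfl)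
    have : N = K₀ := le_antisymm hNK hK₀le
    exact hNns (this ▸ hK₀sol)
  obtain ⟨x₁, hx₁N, hx₁cl⟩ := hex
  have hNbot : N ≠ ⊥ := fun h => hNns (h ▸ (inferInstance : Group.IsSolvable (⊥ : Subgroup G)))
  -- the subgroup of elements with proper normal closure
  have keyM : ∃ M : Subgroup G, M.Normal ∧ M ≤ N ∧
      (∀ x, x ∈ M ↔ x ∈ N ∧ Subgroup.normalClosure {x} ≠ N) := by
    refine ⟨{ carrier := {x : G | x ∈ N ∧ Subgroup.normalClosure {x} ≠ N}
              one_mem' := ?hone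
              mul_mem' := ?hmul
              inv_mem' := ?hinv }, ?hnorm, fun x hx => hx.1, fun x => Iff.rfl⟩
    case hone =>
      refine ⟨N.one_mem, ?_⟩
      have : Subgroup.normalClosure ({(1 : G)} : Set G) = ⊥ := by
        apply le_antisymm _ bot_le
        exact Subgroup.normalClosure_le_normal (by simp)
      rw [this]
      exact fun h => hNbot h.symm
    case hmul =>
      rintro a b ⟨haN, hacl⟩ ⟨hbN, hbcl⟩
      refine ⟨N.mul_mem haN hbN, ?_⟩
      have hsa : IsSolvable (Subgroup.normalClosure {a}) :=
        hsolv_lt _ inferInstance (hclle a haN) hacl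
      have hsb : IsSolvable (Subgroup.normalClosure {b}) :=
        hsolv_lt _ inferInstance (hclle b hbN) hbcl
      set J := Subgroup.normalClosure ({a} : Set G) ⊔ Subgroup.normalClosure ({b} : Set G)
        with hJ
      have hJle : J ≤ N := sup_le (hclle a haN) (hclle b hbN)
      have hJsol : IsSolvable J := isSolvable_sup hsa hsb
      have habJ : a * b ∈ J := J.mul_mem
        (Subgroup.mem_sup_left (Subgroup.subset_normalClosure (s := ({a} : Set G)) rfl))
        (Subgroup.mem_sup_right (Subgroup.subset_normalClosure (s := ({b} : Set G)) rfl))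
      have hclJ : Subgroup.normalClosure {a * b} ≤ J :=
        Subgroup.normalClosure_le_normal (by simpa using habJ)
      intro hcl
      have : J = N := le_antisymm hJle (hcl ▸ hclJ)
      exact hNns (this ▸ hJsol)
    case hinv =>
      rintro a ⟨haN, hacl⟩
      exact ⟨N.inv_mem haN, by rwa [normalClosure_singleton_inv]⟩
    case hnorm =>
      constructor
      rintro a ⟨haN, hacl⟩ c
      exact ⟨hNnormal.conj_mem a haN c, by rwa [normalClosure_singleton_conj]⟩
  obtain ⟨M, hMnormal, hMle, hMmem⟩ := keyM
  haveI := hMnormal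
  have hx₁M : x₁ ∉ M := fun h => ((hMmem x₁).mp h).2 hx₁cl
  have hMsol : IsSolvable M :=
    hsolv_lt M hMnormal hMle (fun h => hx₁M (by rw [h]; exact hx₁N))
  -- all elements of N \ M have normal closure N, hence the same order
  have hclN : ∀ x, x ∈ N → x ∉ M → Subgroup.normalClosure {x} = N := by
    intro x hxN hxM
    by_contra h
    exact hxM ((hMmem x).mpr ⟨hxN, h⟩)
  have horder : ∀ x y : G, x ∈ N → x ∉ M → y ∈ N → y ∉ M → orderOf x = orderOf y := by
    intro x y hxN hxM hyN hyM
    rcases hG x y ((hclN x hxN hxM).trans (hclN y hyN hyM).symm) with h | h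
    · exact isConj_orderOf_eq h
    · rw [isConj_orderOf_eq h, orderOf_inv]
  set M' := M.subgroupOf N with hM'
  haveI : M'.Normal := Subgroup.normal_subgroupOf
  haveI : Nontrivial (N ⧸ M') := by
    refine ⟨QuotientGroup.mk ⟨x₁, hx₁N⟩, 1, fun h => hx₁M ?_⟩
    exact Subgroup.mem_subgroupOf.mp ((QuotientGroup.eq_one_iff _).mp h)
  have hcard1 : Nat.card (N ⧸ M') ≠ 1 :=
    (Finite.one_lt_card (α := N ⧸ M')).ne'
  set q := (Nat.card (N ⧸ M')).minFac with hqdef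
  have hq : q.Prime := Nat.minFac_prime hcard1
  haveI : Fact q.Prime := ⟨hq⟩
  obtain ⟨gbar, hgbar⟩ := exists_prime_orderOf_dvd_card' (G := N ⧸ M') q (Nat.minFac_dvd _)
  obtain ⟨z, rfl⟩ := QuotientGroup.mk_surjective gbar
  have hzM : (z : G) ∉ M := by
    intro h
    have h1 : (QuotientGroup.mk z : N ⧸ M') = 1 :=
      (QuotientGroup.eq_one_iff _).mpr (Subgroup.mem_subgroupOf.mpr h)
    rw [h1, orderOf_one] at hgbar
    exact hq.ne_one hgbar.symm
  set n := orderOf (z : G) with hn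
  have hn0 : n ≠ 0 := (orderOf_pos _).ne'
  have hzn : orderOf z = n := (Subgroup.orderOf_coe z).symm
  have hqn : q ∣ n := by
    have hd : orderOf (QuotientGroup.mk z : N ⧸ M') ∣ orderOf z :=
      orderOf_map_dvd (QuotientGroup.mk' M') z
    rwa [hgbar, hzn] at hd
  set b := n.factorization q with hb
  set k := n / q ^ b with hk
  have hkdvd : k ∣ n := Nat.ordCompl_dvd n q
  have hkpos : 0 < k := Nat.ordCompl_pos q hn0
  have hnqk : n = q ^ b * k := (Nat.ordProj_mul_ordCompl_eq_self n q).symm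
  have hordy : orderOf ((z : G) ^ k) = q ^ b := by
    rw [orderOf_pow (z : G), ← hn, Nat.gcd_eq_right hkdvd]
    exact Nat.div_eq_of_eq_mul_left hkpos hnqk
  have hyN : (z : G) ^ k ∈ N := N.pow_mem z.2 k
  have hyM : (z : G) ^ k ∉ M := by
    intro h
    have h1 : (QuotientGroup.mk (z ^ k) : N ⧸ M') = 1 :=
      (QuotientGroup.eq_one_iff _).mpr (Subgroup.mem_subgroupOf.mpr (by simpa using h))
    have h2 : (QuotientGroup.mk z : N ⧸ M') ^ k = 1 := by
      rw [← QuotientGroup.mk_pow]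
      exact h1
    have h3 : q ∣ k := hgbar ▸ orderOf_dvd_of_pow_eq_one h2
    exact Nat.not_dvd_ordCompl hq hn0 h3
  have hn_eq : n = q ^ b := by
    have := horder ((z : G) ^ k) (z : G) hyN hyM z.2 hzM
    rw [hordy, ← hn] at this
    exact this.symm
  have hPG : IsPGroup q (N ⧸ M') := by
    intro g
    obtain ⟨w, rfl⟩ := QuotientGroup.mk_surjective g
    by_cases hw : (w : G) ∈ M
    · exact ⟨0, by
        have : (QuotientGroup.mk w : N ⧸ M') = 1 :=
          (QuotientGroup.eq_one_iff _).mpr (Subgroup.mem_subgroupOf.mpr hw)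
        simp [this]⟩
    · refine ⟨b, ?_⟩
      have hwo : orderOf (w : G) = n := horder _ _ w.2 hw z.2 hzM
      have hw1 : w ^ q ^ b = 1 := by
        apply Subtype.ext
        push_cast
        rw [← hn_eq, ← hwo]
        exact pow_orderOf_eq_one _
      rw [← QuotientGroup.mk_pow, hw1]
      exact (QuotientGroup.eq_one_iff _).mpr M'.one_mem
  haveI : Group.IsNilpotent (N ⧸ M') := hPG.isNilpotent
  haveI hQsol : IsSolvable (N ⧸ M') := (inferInstance : Group.IsSolvable _)
  haveI : Group.IsSolvable M := hMsol
  haveI hM'sol : IsSolvable M' :=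
    solvable_of_solvable_injective
      (f := (Subgroup.subgroupOfEquivOfLe hMle).toMonoidHom) (MulEquiv.injective _)
  exact hNns (isSolvable_of_normal_quotient M' hM'sol hQsol)
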